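/- Let R be a rational map of degree D ≥ 2 over an algebraically closed field of characteristic 0. After replacing R by a suitable iterate R^m (m ≥ 1), every point y ∈ ℙ¹ not in the exceptional set E satisfies deg_{R^m}(y) < D^m, where E is the set of points totally invariant under R or R². -/

import Mathlib

open Polynomial Classical
noncomputable section

namespace P1

variable {K : Type*} [Field K]

/-- Eliminator for `OnePoint K` (which is `Option K`). -/
noncomputable def pelim {α : Type*} (x : OnePoint K) (i : α) (f : K → α) : α :=
  Option.elim x i f

/-- The degree of a rational map, as the max of the degrees of its
numerator and denominator (written in lowest terms). -/
noncomputable def degree (R : RatFunc K) : ℕ := max R.num.natDegree R.denom.natDegree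

/-- The action of a rational map on the projective line `ℙ¹(K) = K ∪ {∞}`. -/
noncomputable def eval1 (R : RatFunc K) : OnePoint K → OnePoint K :=
  fun x => pelim x
    (if R.num.natDegree < R.denom.natDegree then ((0 : K) : OnePoint K)
     else if R.denom.natDegree < R.num.natDegree then OnePoint.infty
     else ((R.num.leadingCoeff / R.denom.leadingCoeff : K) : OnePoint K))
    (fun z => if R.denom.eval z = 0 then OnePoint.infty
      else ((R.num.eval z / R.denom.eval z : K) : OnePoint K))

/-- The local degree (ramification index) of a rational map at a point of `ℙ¹(K)`. -/
noncomputable def locDeg (R : RatFunc K) : OnePoint K → ℕ :=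
  fun x => pelim x
    (if R.denom.natDegree < R.num.natDegree then R.num.natDegree - R.denom.natDegree
     else if R.num.natDegree < R.denom.natDegree then R.denom.natDegree - R.num.natDegree
     else rootMultiplicity (0 : K)
       (R.denom.leadingCoeff • R.num.reverse - R.num.leadingCoeff • R.denom.reverse))
    (fun a => if R.denom.eval a = 0 then rootMultiplicity a R.denom
      else rootMultiplicity a (R.num - Polynomial.C (R.num.eval a / R.denom.eval a) * R.denom))

/-- The local degree of the `n`-th iterate of `R`, via multiplicativity of
local degrees along orbits. -/
noncomputable def locDegIter (R : RatFunc K) (n : ℕ) (y : OnePoint K) : ℕ :=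
  ∏ k ∈ Finset.range n, locDeg R ((eval1 R)^[k] y)

/-- The Möbius transformation `z ↦ (a z + b)/(c z + d)` of `ℙ¹(K)`. -/
noncomputable def mobius (a b c d : K) : OnePoint K → OnePoint K :=
  fun x => pelim x
    (if c = 0 then OnePoint.infty else ((a / c : K) : OnePoint K))
    (fun z => if c * z + d = 0 then OnePoint.infty
      else (((a * z + b) / (c * z + d) : K) : OnePoint K))

/-- A self-map of `ℙ¹(K)` is a Möbius transformation (an element of `PGL(2,K)`). -/
def IsMobius (φ : OnePoint K → OnePoint K) : Prop :=
  ∃ a b c d : K, a * d - b * c ≠ 0 ∧ φ = mobius a b c d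

/-- The power map `z ↦ z^D` on `ℙ¹(K)`. -/
noncomputable def powMap (D : ℕ) : OnePoint K → OnePoint K :=
  fun x => pelim x OnePoint.infty (fun z => ((z ^ D : K) : OnePoint K))

/-- The map `z ↦ z^{-D}` on `ℙ¹(K)`. -/
noncomputable def powMapInv (D : ℕ) : OnePoint K → OnePoint K :=
  fun x => pelim x ((0 : K) : OnePoint K)
    (fun z => if z = 0 then OnePoint.infty else (((z ^ D)⁻¹ : K) : OnePoint K))

/-- The map `z ↦ P(z)` on `ℙ¹(K)` induced by a polynomial `P` (with `∞ ↦ ∞`). -/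
noncomputable def polyMap (P : Polynomial K) : OnePoint K → OnePoint K :=
  fun x => pelim x OnePoint.infty (fun z => ((P.eval z : K) : OnePoint K))

end P1
end
namespace P1Aux
open P1 Polynomial

variable {K : Type*} [Field K]

lemma eval1_coe (R : RatFunc K) (a : K) :
    eval1 R (a : OnePoint K) = if R.denom.eval a = 0 then OnePoint.infty
      else ((R.num.eval a / R.denom.eval a : K) : OnePoint K) := rfl

lemma eval1_infty (R : RatFunc K) :
    eval1 R OnePoint.infty =
      (if R.num.natDegree < R.denom.natDegree then ((0 : K) : OnePoint K)
       else if R.denom.natDegree < R.num.natDegree then OnePoint.infty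
       else ((R.num.leadingCoeff / R.denom.leadingCoeff : K) : OnePoint K)) := rfl

lemma locDeg_coe (R : RatFunc K) (a : K) :
    locDeg R (a : OnePoint K) =
      (if R.denom.eval a = 0 then rootMultiplicity a R.denom
       else rootMultiplicity a (R.num - Polynomial.C (R.num.eval a / R.denom.eval a) * R.denom)) := rfl

lemma locDeg_infty (R : RatFunc K) :
    locDeg R OnePoint.infty =
      (if R.denom.natDegree < R.num.natDegree then R.num.natDegree - R.denom.natDegree
       else if R.num.natDegree < R.denom.natDegree then R.denom.natDegree - R.num.natDegree
       else rootMultiplicity (0 : K)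
         (R.denom.leadingCoeff • R.num.reverse - R.num.leadingCoeff • R.denom.reverse)) := rfl

lemma rootMult_le {p : K[X]} (hp : p ≠ 0) (a : K) : rootMultiplicity a p ≤ p.natDegree := by
  have h := Polynomial.pow_rootMultiplicity_dvd p a
  have h2 := Polynomial.natDegree_le_of_dvd h hp
  simpa using h2

lemma pow_struct {p : K[X]} {a : K} {D : ℕ} (hp : p ≠ 0) (hdle : p.natDegree ≤ D)
    (hr : D ≤ rootMultiplicity a p) :
    ∃ c : K, c ≠ 0 ∧ p = C c * (X - C a) ^ D := by
  obtain ⟨u, hu⟩ := (Polynomial.le_rootMultiplicity_iff hp).mp hr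
  have hu0 : u ≠ 0 := by rintro rfl; rw [mul_zero] at hu; exact hp hu
  have hXa : ((X - C a : K[X]) ^ D) ≠ 0 := pow_ne_zero _ (X_sub_C_ne_zero a)
  have hdeg : p.natDegree = D + u.natDegree := by
    rw [hu, natDegree_mul hXa hu0, natDegree_pow, natDegree_X_sub_C, mul_one]
  have hund : u.natDegree = 0 := by omega
  obtain ⟨c, hc⟩ := Polynomial.natDegree_eq_zero.mp hund
  refine ⟨c, ?_, ?_⟩
  · rintro rfl; rw [map_zero] at hc; exact hu0 hc.symm
  · rw [hu, ← hc, mul_comm]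

lemma const_contra (R : RatFunc K) {D : ℕ} (hD : 1 ≤ D) (hdeg : P1.degree R = D)
    {v : K} (h : R.num = C v * R.denom) : False := by
  have hd : R.denom ∣ R.num := ⟨C v, by rw [h, mul_comm]⟩
  have hunit : IsUnit R.denom := (R.isCoprime_num_denom).symm.isUnit_of_dvd' dvd_rfl hd
  have hdd : R.denom.natDegree = 0 := natDegree_eq_zero_of_isUnit hunit
  have hnd : R.num.natDegree = 0 := by
    refine le_antisymm ?_ (Nat.zero_le _)
    rw [h]
    refine le_trans natDegree_mul_le ?_
    simp [hdd]
  rw [P1.degree, hnd, hdd] at hdeg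
  omega

lemma num_ne (R : RatFunc K) {D : ℕ} (hD : 1 ≤ D) (hdeg : P1.degree R = D) : R.num ≠ 0 := by
  intro h
  exact const_contra R hD hdeg (v := 0) (by simp [h])

lemma Q_struct (R : RatFunc K) {D : ℕ} (hD : 1 ≤ D) (hdeg : P1.degree R = D) (v v' : K)
    (hloc : D ≤ rootMultiplicity v' (R.num - C v * R.denom)) :
    ∃ c : K, c ≠ 0 ∧ R.num - C v * R.denom = C c * (X - C v') ^ D := by
  have hnd : R.num.natDegree ≤ D := by rw [← hdeg]; exact le_max_left _ _
  have hdd : R.denom.natDegree ≤ D := by rw [← hdeg]; exact le_max_right _ _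
  have hQ0 : R.num - C v * R.denom ≠ 0 := by
    intro h
    exact const_contra R hD hdeg (v := v) (sub_eq_zero.mp h)
  have hdle : (R.num - C v * R.denom).natDegree ≤ D := by
    refine le_trans (natDegree_sub_le _ _) (max_le hnd ?_)
    refine le_trans natDegree_mul_le ?_
    simp [hdd]
  exact pow_struct hQ0 hdle hloc

lemma pole_struct (R : RatFunc K) {D : ℕ} (hdeg : P1.degree R = D) {a : K}
    (hloc : D ≤ rootMultiplicity a R.denom) :
    R.denom = (X - C a) ^ D ∧ R.denom.natDegree = D := by
  have hdd : R.denom.natDegree ≤ D := by rw [← hdeg]; exact le_max_right _ _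
  obtain ⟨c, hc0, hc⟩ := pow_struct (R.denom_ne_zero) hdd hloc
  have hmon := R.monic_denom
  have hlc : R.denom.leadingCoeff = 1 := hmon.leadingCoeff
  have hc1 : c = 1 := by
    rw [hc, leadingCoeff_mul, leadingCoeff_C, ((monic_X_sub_C a).pow D).leadingCoeff, mul_one] at hlc
    exact hlc
  rw [hc1, map_one, one_mul] at hc
  refine ⟨hc, ?_⟩
  rw [hc, natDegree_pow, natDegree_X_sub_C, mul_one]

lemma reflect_reflect (N : ℕ) (p : K[X]) : Polynomial.reflect N (Polynomial.reflect N p) = p := by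
  ext i
  rw [coeff_reflect, coeff_reflect, revAt_invol]

lemma natDegree_reflect_le {p : K[X]} {N : ℕ} (h : p.natDegree ≤ N) :
    (Polynomial.reflect N p).natDegree ≤ N := by
  refine natDegree_le_iff_coeff_eq_zero.mpr fun i hi => ?_
  rw [coeff_reflect]
  have hrev : revAt N i = i := by
    exact revAt_eq_self_of_lt hi
  rw [hrev]
  exact coeff_eq_zero_of_natDegree_lt (lt_of_le_of_lt h hi)

lemma infty_struct (R : RatFunc K) {D : ℕ} (hD : 1 ≤ D) (hdeg : P1.degree R = D)
    (hnd : R.num.natDegree = R.denom.natDegree)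
    (hloc : D ≤ rootMultiplicity (0 : K)
      (R.denom.leadingCoeff • R.num.reverse - R.num.leadingCoeff • R.denom.reverse)) :
    ∃ c : K, c ≠ 0 ∧ R.num - C R.num.leadingCoeff * R.denom = C c := by
  have hdd : R.denom.natDegree = D := by
    rw [P1.degree, hnd, max_self] at hdeg; exact hdeg
  have hnD : R.num.natDegree = D := hnd.trans hdd
  have hP0 : R.num - C R.num.leadingCoeff * R.denom ≠ 0 := by
    intro h
    exact const_contra R hD hdeg (sub_eq_zero.mp h)
  have hPdle : (R.num - C R.num.leadingCoeff * R.denom).natDegree ≤ D := by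
    refine le_trans (natDegree_sub_le _ _) (max_le hnD.le ?_)
    refine le_trans natDegree_mul_le ?_
    simp [hdd]
  have h1 : R.num.reverse = Polynomial.reflect D R.num := by rw [Polynomial.reverse, hnD]
  have h2 : R.denom.reverse = Polynomial.reflect D R.denom := by rw [Polynomial.reverse, hdd]
  have hq : R.denom.leadingCoeff • R.num.reverse - R.num.leadingCoeff • R.denom.reverse
      = Polynomial.reflect D (R.num - C R.num.leadingCoeff * R.denom) := by
    rw [(R.monic_denom).leadingCoeff, one_smul, smul_eq_C_mul, h1, h2,
      ← Polynomial.reflect_C_mul, ← Polynomial.reflect_sub]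
  rw [hq] at hloc
  have hrne : Polynomial.reflect D (R.num - C R.num.leadingCoeff * R.denom) ≠ 0 := by
    rw [Ne, Polynomial.reflect_eq_zero_iff]; exact hP0
  obtain ⟨c, hc0, hc⟩ := pow_struct hrne (natDegree_reflect_le hPdle) hloc
  refine ⟨c, hc0, ?_⟩
  have := congrArg (Polynomial.reflect D) hc
  rw [reflect_reflect, map_zero, sub_zero, Polynomial.reflect_C_mul_X_pow,
    revAt_le (le_refl D), Nat.sub_self, pow_zero, mul_one] at this
  exact this

lemma ndCmul {c : K} (hc : c ≠ 0) {p : K[X]} (hp : p ≠ 0) :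
    (C c * p).natDegree = p.natDegree := by
  rw [natDegree_mul (C_ne_zero.mpr hc) hp, natDegree_C, zero_add]

lemma locDeg_le (R : RatFunc K) {D : ℕ} (hdeg : P1.degree R = D) (x : OnePoint K) :
    P1.locDeg R x ≤ D := by
  have hnd : R.num.natDegree ≤ D := by rw [← hdeg]; exact le_max_left _ _
  have hdd : R.denom.natDegree ≤ D := by rw [← hdeg]; exact le_max_right _ _
  cases x with
  | infty =>
    rw [locDeg_infty]
    split_ifs with h1 h2
    · omega
    · omega
    · by_cases h0 : R.denom.leadingCoeff • R.num.reverse - R.num.leadingCoeff • R.denom.reverse = 0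
      · rw [h0, rootMultiplicity_zero]; exact Nat.zero_le _
      · refine le_trans (rootMult_le h0 0) ?_
        refine le_trans (natDegree_sub_le _ _) (max_le ?_ ?_) <;>
          refine le_trans (natDegree_smul_le _ _) ?_
        · rw [Polynomial.reverse]
          exact le_trans (natDegree_reflect_le (le_refl _)) hnd
        · rw [Polynomial.reverse]
          exact le_trans (natDegree_reflect_le (le_refl _)) hdd
  | coe a =>
    rw [locDeg_coe]
    split_ifs with h1
    · exact le_trans (rootMult_le R.denom_ne_zero a) hdd
    · by_cases h0 : R.num - C (R.num.eval a / R.denom.eval a) * R.denom = 0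
      · rw [h0, rootMultiplicity_zero]; exact Nat.zero_le _
      · refine le_trans (rootMult_le h0 a) ?_
        refine le_trans (natDegree_sub_le _ _) (max_le hnd ?_)
        refine le_trans natDegree_mul_le ?_
        simp [hdd]

lemma fiber_eq (R : RatFunc K) {D : ℕ} (hD : 1 ≤ D) (hdeg : P1.degree R = D)
    {x : OnePoint K} (hx : P1.locDeg R x = D) :
    P1.eval1 R ⁻¹' {P1.eval1 R x} = {x} := by
  have hnd : R.num.natDegree ≤ D := by rw [← hdeg]; exact le_max_left _ _
  have hdd : R.denom.natDegree ≤ D := by rw [← hdeg]; exact le_max_right _ _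
  have hD0 : D ≠ 0 := by omega
  ext z
  simp only [Set.mem_preimage, Set.mem_singleton_iff]
  constructor
  · intro hz
    cases x with
    | infty =>
      rw [locDeg_infty] at hx
      rw [eval1_infty] at hz
      rcases lt_trichotomy R.num.natDegree R.denom.natDegree with h1 | h1 | h1
      · -- nd < dd : ∞ ↦ 0
        rw [if_neg (by omega), if_pos h1] at hx
        rw [if_pos h1] at hz
        have hn0 : R.num.natDegree = 0 := by omega
        have hnne := num_ne R hD hdeg
        cases z with
        | infty => rfl
        | coe b =>
          exfalso
          rw [eval1_coe] at hz
          by_cases hb : R.denom.eval b = 0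
          · rw [if_pos hb] at hz
            exact OnePoint.coe_ne_infty (0 : K) hz.symm
          · rw [if_neg hb] at hz
            have h3 : R.num.eval b / R.denom.eval b = 0 := OnePoint.coe_eq_coe.mp hz
            have h4 : R.num.eval b = 0 := by
              rcases div_eq_zero_iff.mp h3 with h | h
              · exact h
              · exact absurd h hb
            have h5 := eq_C_of_natDegree_eq_zero hn0
            rw [h5, eval_C] at h4
            rw [h5, h4, map_zero] at hnne
            exact hnne rfl
      · -- nd = dd
        rw [if_neg (by omega), if_neg (by omega)] at hx
        rw [if_neg (by omega), if_neg (by omega)] at hz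
        obtain ⟨c, hc0, hP⟩ := infty_struct R hD hdeg h1 hx.ge
        rw [(R.monic_denom).leadingCoeff, div_one] at hz
        cases z with
        | infty => rfl
        | coe b =>
          exfalso
          rw [eval1_coe] at hz
          by_cases hb : R.denom.eval b = 0
          · rw [if_pos hb] at hz
            exact OnePoint.coe_ne_infty _ hz.symm
          · rw [if_neg hb] at hz
            have h3 : R.num.eval b / R.denom.eval b = R.num.leadingCoeff :=
              OnePoint.coe_eq_coe.mp hz
            rw [div_eq_iff hb] at h3
            have h4 : (R.num - C R.num.leadingCoeff * R.denom).eval b = 0 := by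
              rw [eval_sub, eval_mul, eval_C, h3]; ring
            rw [hP, eval_C] at h4
            exact hc0 h4
      · -- dd < nd : ∞ ↦ ∞
        rw [if_pos h1] at hx
        rw [if_neg (by omega), if_pos h1] at hz
        have hdd0 : R.denom.natDegree = 0 := by omega
        have hd1 : R.denom = 1 := (R.monic_denom).natDegree_eq_zero.mp hdd0
        cases z with
        | infty => rfl
        | coe b =>
          exfalso
          rw [eval1_coe, hd1] at hz
          simp only [eval_one, one_ne_zero, if_neg] at hz
          exact OnePoint.coe_ne_infty _ hz
    | coe a =>
      rw [locDeg_coe] at hx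
      rw [eval1_coe] at hz
      by_cases ha : R.denom.eval a = 0
      · rw [if_pos ha] at hx hz
        obtain ⟨hdfac, hddD⟩ := pole_struct R hdeg hx.ge
        cases z with
        | infty =>
          exfalso
          rw [eval1_infty] at hz
          split_ifs at hz with h1 h2
          · exact OnePoint.coe_ne_infty _ hz
          · omega
          · exact OnePoint.coe_ne_infty _ hz
        | coe b =>
          rw [eval1_coe] at hz
          by_cases hb : R.denom.eval b = 0
          · rw [hdfac] at hb
            simp only [eval_pow, eval_sub, eval_X, eval_C] at hb
            have : b - a = 0 := pow_eq_zero_iff hD0 |>.mp hb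
            rw [sub_eq_zero.mp this]
          · rw [if_neg hb] at hz
            exact absurd hz (OnePoint.coe_ne_infty _)
      · rw [if_neg ha] at hx hz
        obtain ⟨c, hc0, hQ⟩ := Q_struct R hD hdeg _ _ hx.ge
        cases z with
        | coe b =>
          rw [eval1_coe] at hz
          by_cases hb : R.denom.eval b = 0
          · rw [if_pos hb] at hz
            exact absurd hz.symm (OnePoint.coe_ne_infty _)
          · rw [if_neg hb] at hz
            have hzz := OnePoint.coe_eq_coe.mp hz
            rw [div_eq_iff hb] at hzz
            have h4 : (R.num - C (R.num.eval a / R.denom.eval a) * R.denom).eval b = 0 := by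
              rw [eval_sub, eval_mul, eval_C, hzz]
              ring
            rw [hQ] at h4
            simp only [eval_mul, eval_pow, eval_sub, eval_X, eval_C] at h4
            rcases mul_eq_zero.mp h4 with h | h
            · exact absurd h hc0
            · have : b - a = 0 := pow_eq_zero_iff hD0 |>.mp h
              rw [sub_eq_zero.mp this]
        | infty =>
          exfalso
          rw [eval1_infty] at hz
          split_ifs at hz with h1 h2
          · -- nd < dd and v = 0
            have hv0 : (0 : K) = R.num.eval a / R.denom.eval a := OnePoint.coe_eq_coe.mp hz
            rw [← hv0, map_zero, zero_mul, sub_zero] at hQ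
            have : R.num.natDegree = D := by
              rw [hQ, ndCmul hc0 (pow_ne_zero _ (X_sub_C_ne_zero a)), natDegree_pow,
                natDegree_X_sub_C, mul_one]
            omega
          · exact OnePoint.coe_ne_infty _ hz.symm
          · -- equal degrees, v = leadingCoeff num
            have h3 : R.num.natDegree = R.denom.natDegree := by omega
            have hvlc : R.num.leadingCoeff = R.num.eval a / R.denom.eval a := by
              have h4 := OnePoint.coe_eq_coe.mp hz
              rwa [(R.monic_denom).leadingCoeff, div_one] at h4
            have hndD : R.num.natDegree = D := by
              rw [P1.degree, h3, max_self] at hdeg; rw [h3]; exact hdeg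
            have hQne : R.num - C (R.num.eval a / R.denom.eval a) * R.denom ≠ 0 := by
              rw [hQ]
              exact mul_ne_zero (C_ne_zero.mpr hc0) (pow_ne_zero _ (X_sub_C_ne_zero a))
            have hQdeg : (R.num - C (R.num.eval a / R.denom.eval a) * R.denom).natDegree = D := by
              rw [hQ, ndCmul hc0 (pow_ne_zero _ (X_sub_C_ne_zero a)), natDegree_pow,
                natDegree_X_sub_C, mul_one]
            have hcoeff : (R.num - C (R.num.eval a / R.denom.eval a) * R.denom).coeff D = 0 := by
              rw [coeff_sub, coeff_C_mul]
              have e1 : R.num.coeff D = R.num.leadingCoeff := by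
                rw [Polynomial.leadingCoeff, hndD]
              have e2 : R.denom.coeff D = 1 := by
                have : R.denom.natDegree = D := h3 ▸ hndD
                rw [← this]
                exact (R.monic_denom).coeff_natDegree
              rw [e1, e2, mul_one, hvlc, sub_self]
            have : (R.num - C (R.num.eval a / R.denom.eval a) * R.denom).leadingCoeff = 0 := by
              rw [Polynomial.leadingCoeff, hQdeg]; exact hcoeff
            rw [leadingCoeff_eq_zero] at this
            exact hQne this
  · rintro rfl; rfl

lemma W_ne_zero [CharZero K] (R : RatFunc K) {D : ℕ} (hD : 1 ≤ D) (hdeg : P1.degree R = D) :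
    R.num.derivative * R.denom - R.num * R.denom.derivative ≠ 0 := by
  intro h
  rw [sub_eq_zero] at h
  have hd : R.denom ∣ R.denom.derivative := by
    exact (R.isCoprime_num_denom.symm).dvd_of_dvd_mul_right
      ⟨R.num.derivative, by rw [mul_comm R.denom.derivative R.num, ← h, mul_comm]⟩
  have hdd0 : R.denom.natDegree = 0 := by
    by_cases h0 : R.denom.derivative = 0
    · exact natDegree_eq_zero_of_derivative_eq_zero h0
    · have h1 := Polynomial.natDegree_le_of_dvd hd h0
      have h2 := Polynomial.natDegree_derivative_le R.denom
      omega
  have hn : R.num ∣ R.num.derivative := by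
    exact (R.isCoprime_num_denom).dvd_of_dvd_mul_right ⟨R.denom.derivative, h⟩
  have hnd0 : R.num.natDegree = 0 := by
    by_cases h0 : R.num.derivative = 0
    · exact natDegree_eq_zero_of_derivative_eq_zero h0
    · have h1 := Polynomial.natDegree_le_of_dvd hn h0
      have h2 := Polynomial.natDegree_derivative_le R.num
      omega
  rw [P1.degree, hnd0, hdd0] at hdeg
  omega

lemma natDegree_le_pred {p : K[X]} {D : ℕ} (h1 : p.natDegree ≤ D) (h2 : p.coeff D = 0) :
    p.natDegree ≤ D - 1 := by
  rcases eq_or_lt_of_le h1 with h | h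
  · by_cases h0 : p = 0
    · simp [h0]
    · exfalso
      apply h0
      rw [← leadingCoeff_eq_zero, Polynomial.leadingCoeff, h]
      exact h2
  · omega

lemma W_deg (R : RatFunc K) {D : ℕ} (hD : 2 ≤ D) (hdeg : P1.degree R = D) :
    (R.num.derivative * R.denom - R.num * R.denom.derivative).natDegree ≤ 2 * D - 2 := by
  have hnd : R.num.natDegree ≤ D := by rw [← hdeg]; exact le_max_left _ _
  have hdd : R.denom.natDegree ≤ D := by rw [← hdeg]; exact le_max_right _ _
  have hn' := Polynomial.natDegree_derivative_le R.num
  have hd' := Polynomial.natDegree_derivative_le R.denom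
  rcases eq_or_ne R.num.natDegree R.denom.natDegree with he | he
  · have hndD : R.num.natDegree = D := by
      rw [P1.degree, he, max_self] at hdeg; rw [he]; exact hdeg
    have hddD : R.denom.natDegree = D := he ▸ hndD
    have hW : R.num.derivative * R.denom - R.num * R.denom.derivative
        = (R.num - C R.num.leadingCoeff * R.denom).derivative * R.denom
          - (R.num - C R.num.leadingCoeff * R.denom) * R.denom.derivative := by
      rw [derivative_sub, derivative_C_mul]
      ring
    have hPle : (R.num - C R.num.leadingCoeff * R.denom).natDegree ≤ D := by
      refine le_trans (natDegree_sub_le _ _) (max_le hnd ?_)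
      refine le_trans natDegree_mul_le ?_
      simp [hdd]
    have hP : (R.num - C R.num.leadingCoeff * R.denom).natDegree ≤ D - 1 := by
      refine natDegree_le_pred hPle ?_
      rw [coeff_sub, coeff_C_mul]
      have e1 : R.num.coeff D = R.num.leadingCoeff := by rw [Polynomial.leadingCoeff, hndD]
      have e2 : R.denom.coeff D = 1 := by
        rw [← hddD]; exact (R.monic_denom).coeff_natDegree
      rw [e1, e2, mul_one, sub_self]
    have hP' := Polynomial.natDegree_derivative_le (R.num - C R.num.leadingCoeff * R.denom)
    rw [hW]
    refine le_trans (natDegree_sub_le _ _) (max_le ?_ ?_) <;> refine le_trans natDegree_mul_le ?_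
    · omega
    · omega
  · have hor : R.num.natDegree = D ∨ R.denom.natDegree = D := by
      rw [P1.degree] at hdeg
      rcases le_total R.num.natDegree R.denom.natDegree with h | h
      · right; rw [max_eq_right h] at hdeg; exact hdeg
      · left; rw [max_eq_left h] at hdeg; exact hdeg
    refine le_trans (natDegree_sub_le _ _) (max_le ?_ ?_) <;> refine le_trans natDegree_mul_le ?_
    · rcases hor with h | h <;> omega
    · rcases hor with h | h <;> omega

lemma W_deg_infty (R : RatFunc K) {D : ℕ} (hD : 2 ≤ D) (hdeg : P1.degree R = D)
    (hx : P1.locDeg R OnePoint.infty = D) :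
    (R.num.derivative * R.denom - R.num * R.denom.derivative).natDegree ≤ D - 1 := by
  have hnd : R.num.natDegree ≤ D := by rw [← hdeg]; exact le_max_left _ _
  have hdd : R.denom.natDegree ≤ D := by rw [← hdeg]; exact le_max_right _ _
  have hn' := Polynomial.natDegree_derivative_le R.num
  have hd' := Polynomial.natDegree_derivative_le R.denom
  rw [locDeg_infty] at hx
  split_ifs at hx with h1 h2
  · -- dd < nd
    have hdd0 : R.denom.natDegree = 0 := by omega
    have hdC : R.denom.derivative = 0 := by
      rw [eq_C_of_natDegree_eq_zero hdd0]; exact derivative_C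
    rw [hdC, mul_zero, sub_zero]
    refine le_trans natDegree_mul_le ?_
    omega
  · -- nd < dd
    have hnd0 : R.num.natDegree = 0 := by omega
    have hnC : R.num.derivative = 0 := by
      rw [eq_C_of_natDegree_eq_zero hnd0]; exact derivative_C
    rw [hnC, zero_mul, zero_sub, natDegree_neg]
    refine le_trans natDegree_mul_le ?_
    omega
  · have he : R.num.natDegree = R.denom.natDegree := by omega
    obtain ⟨c, hc0, hP⟩ := infty_struct R (by omega) hdeg he hx.ge
    have hW : R.num.derivative * R.denom - R.num * R.denom.derivative
        = -(C c * R.denom.derivative) := by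
      have h1 : R.num = C R.num.leadingCoeff * R.denom + C c := by rw [← hP]; ring
      rw [h1, derivative_add, derivative_C_mul, derivative_C, add_zero]
      ring
    rw [hW, natDegree_neg]
    refine le_trans natDegree_mul_le ?_
    rw [natDegree_C]
    omega

lemma TR_dvd (R : RatFunc K) {D e : ℕ} (hDe : D = e + 1) (hdeg : P1.degree R = D) {a : K}
    (hx : P1.locDeg R (a : OnePoint K) = D) :
    (X - C a) ^ e ∣ R.num.derivative * R.denom - R.num * R.denom.derivative := by
  have hD : 1 ≤ D := by omega
  rw [locDeg_coe] at hx
  split_ifs at hx with ha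
  · obtain ⟨hdfac, -⟩ := pole_struct R hdeg hx.ge
    refine ⟨(X - C a) * R.num.derivative - R.num * (C ((D : K))), ?_⟩
    rw [hdfac, derivative_pow, derivative_X_sub_C]
    subst hDe
    simp only [Nat.add_sub_cancel, Nat.cast_add, Nat.cast_one]
    ring
  · obtain ⟨c, hc0, hQ⟩ := Q_struct R hD hdeg _ _ hx.ge
    have hW : R.num.derivative * R.denom - R.num * R.denom.derivative
        = (C c * (X - C a) ^ D).derivative * R.denom
          - (C c * (X - C a) ^ D) * R.denom.derivative := by
      have h1 : R.num = C c * (X - C a) ^ D + C (R.num.eval a / R.denom.eval a) * R.denom := by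
        rw [← hQ]; ring
      rw [h1]
      simp only [derivative_add, derivative_C_mul]
      ring
    rw [hW, derivative_C_mul, derivative_pow, derivative_X_sub_C]
    subst hDe
    refine ⟨C c * (C (((e : K)) + 1) * R.denom) - C c * ((X - C a) * R.denom.derivative), ?_⟩
    simp only [Nat.add_sub_cancel, Nat.cast_add, Nat.cast_one]
    ring

lemma no_three [CharZero K] (R : RatFunc K) {D : ℕ} (hD : 2 ≤ D) (hdeg : P1.degree R = D)
    {x y z : OnePoint K} (hxy : x ≠ y) (hxz : x ≠ z) (hyz : y ≠ z)
    (hx : P1.locDeg R x = D) (hy : P1.locDeg R y = D) (hz : P1.locDeg R z = D) : False := by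
  obtain ⟨e, hDe⟩ : ∃ e, D = e + 1 := ⟨D - 1, by omega⟩
  have he1 : 1 ≤ e := by omega
  have hW0 : R.num.derivative * R.denom - R.num * R.denom.derivative ≠ 0 :=
    W_ne_zero R (by omega) hdeg
  have key2 : ∀ a b : K, a ≠ b → P1.locDeg R (a : OnePoint K) = D →
      P1.locDeg R (b : OnePoint K) = D →
      2 * e ≤ (R.num.derivative * R.denom - R.num * R.denom.derivative).natDegree := by
    intro a b hab hla hlb
    have h1 := TR_dvd R hDe hdeg hla
    have h2 := TR_dvd R hDe hdeg hlb
    have hcop : IsCoprime ((X - C a) ^ e) ((X - C b) ^ e) :=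
      (isCoprime_X_sub_C_of_isUnit_sub (isUnit_iff_ne_zero.mpr (sub_ne_zero.mpr hab))).pow
    have hdvd := hcop.mul_dvd h1 h2
    have hle := Polynomial.natDegree_le_of_dvd hdvd hW0
    have hdeg2 : ((X - C a) ^ e * (X - C b) ^ e).natDegree = 2 * e := by
      rw [natDegree_mul (pow_ne_zero _ (X_sub_C_ne_zero a)) (pow_ne_zero _ (X_sub_C_ne_zero b)),
        natDegree_pow, natDegree_pow]
      simp only [natDegree_X_sub_C]
      ring
    omega
  have key3 : ∀ a b c : K, a ≠ b → a ≠ c → b ≠ c → P1.locDeg R (a : OnePoint K) = D →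
      P1.locDeg R (b : OnePoint K) = D → P1.locDeg R (c : OnePoint K) = D →
      3 * e ≤ (R.num.derivative * R.denom - R.num * R.denom.derivative).natDegree := by
    intro a b c hab hac hbc hla hlb hlc
    have h1 := TR_dvd R hDe hdeg hla
    have h2 := TR_dvd R hDe hdeg hlb
    have h3 := TR_dvd R hDe hdeg hlc
    have cab : IsCoprime ((X - C a) ^ e) ((X - C b) ^ e) :=
      (isCoprime_X_sub_C_of_isUnit_sub (isUnit_iff_ne_zero.mpr (sub_ne_zero.mpr hab))).pow
    have cac : IsCoprime ((X - C a) ^ e) ((X - C c) ^ e) :=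
      (isCoprime_X_sub_C_of_isUnit_sub (isUnit_iff_ne_zero.mpr (sub_ne_zero.mpr hac))).pow
    have cbc : IsCoprime ((X - C b) ^ e) ((X - C c) ^ e) :=
      (isCoprime_X_sub_C_of_isUnit_sub (isUnit_iff_ne_zero.mpr (sub_ne_zero.mpr hbc))).pow
    have hdvd := (cac.mul_left cbc).mul_dvd (cab.mul_dvd h1 h2) h3
    have hle := Polynomial.natDegree_le_of_dvd hdvd hW0
    have hdeg3 : ((X - C a) ^ e * (X - C b) ^ e * (X - C c) ^ e).natDegree = 3 * e := by
      rw [natDegree_mul (mul_ne_zero (pow_ne_zero _ (X_sub_C_ne_zero a))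
          (pow_ne_zero _ (X_sub_C_ne_zero b))) (pow_ne_zero _ (X_sub_C_ne_zero c)),
        natDegree_mul (pow_ne_zero _ (X_sub_C_ne_zero a)) (pow_ne_zero _ (X_sub_C_ne_zero b)),
        natDegree_pow, natDegree_pow, natDegree_pow]
      simp only [natDegree_X_sub_C]
      ring
    omega
  have hWd := W_deg R hD hdeg
  cases x with
  | infty =>
    cases y with
    | infty => exact hxy rfl
    | coe b =>
      cases z with
      | infty => exact hxz rfl
      | coe c =>
        have hb : b ≠ c := fun h => hyz (by rw [h])
        have := key2 b c hb hy hz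
        have := W_deg_infty R hD hdeg hx
        omega
  | coe a =>
    cases y with
    | infty =>
      cases z with
      | infty => exact hyz rfl
      | coe c =>
        have hac : a ≠ c := fun h => hxz (by rw [h])
        have := key2 a c hac hx hz
        have := W_deg_infty R hD hdeg hy
        omega
    | coe b =>
      cases z with
      | infty =>
        have hab : a ≠ b := fun h => hxy (by rw [h])
        have := key2 a b hab hx hy
        have := W_deg_infty R hD hdeg hz
        omega
      | coe c =>
        have hab : a ≠ b := fun h => hxy (by rw [h])
        have hac : a ≠ c := fun h => hxz (by rw [h])
        have hbc : b ≠ c := fun h => hyz (by rw [h])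
        have := key3 a b c hab hac hbc hx hy hz
        omega

end P1Aux

open P1 P1Aux in
/-- After replacing `R` by a suitable iterate `R^m` (`m ≥ 1`),
every point `y ∈ ℙ¹(K)` outside the exceptional set `E` (points totally invariant
under `R` or `R²`) has local degree `deg_{R^m}(y) < D^m`. -/
theorem iterate_local_degree_lt
    {K : Type*} [Field K] [IsAlgClosed K] [CharZero K]
    (R : RatFunc K) (D : ℕ) (hD : 2 ≤ D) (hdeg : P1.degree R = D)
    (E : Set (OnePoint K))
    (hE : E = {x : OnePoint K | P1.eval1 R ⁻¹' {x} = {x} ∨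
                (P1.eval1 R)^[2] ⁻¹' {x} = {x}}) :
    ∃ m : ℕ, 1 ≤ m ∧ ∀ y : OnePoint K, y ∉ E → P1.locDegIter R m y < D ^ m := by
  subst hE
  refine ⟨3, by norm_num, ?_⟩
  intro y hy
  haveI : 1 ≤ D := by omega
  have hprod : P1.locDegIter R 3 y
      = P1.locDeg R y * P1.locDeg R (P1.eval1 R y)
        * P1.locDeg R (P1.eval1 R (P1.eval1 R y)) := by
    simp [P1.locDegIter, Finset.prod_range_succ, Function.iterate_succ_apply]
  have hl0 := locDeg_le R hdeg y
  have hl1 := locDeg_le R hdeg (P1.eval1 R y)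
  have hl2 := locDeg_le R hdeg (P1.eval1 R (P1.eval1 R y))
  have hiter2 : (P1.eval1 R)^[2] ⁻¹' {y} = P1.eval1 R ⁻¹' (P1.eval1 R ⁻¹' {y}) := by
    have h2 : (P1.eval1 R)^[2] = (P1.eval1 R) ∘ (P1.eval1 R) := by
      funext w
      simp [Function.iterate_succ_apply]
    rw [h2, Set.preimage_comp]
  by_cases hall : P1.locDeg R y = D ∧ P1.locDeg R (P1.eval1 R y) = D
      ∧ P1.locDeg R (P1.eval1 R (P1.eval1 R y)) = D
  · exfalso
    obtain ⟨h0, h1, h2⟩ := hall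
    apply hy
    show _ ∨ _
    by_cases e01 : y = P1.eval1 R y
    · left
      have hf := fiber_eq R (by omega) hdeg h0
      rw [← e01] at hf
      exact hf
    · by_cases e12 : P1.eval1 R y = P1.eval1 R (P1.eval1 R y)
      · exfalso
        have hf := fiber_eq R (by omega) hdeg h1
        rw [← e12] at hf
        have hmem : y ∈ P1.eval1 R ⁻¹' {P1.eval1 R y} := rfl
        rw [hf] at hmem
        exact e01 hmem
      · by_cases e02 : y = P1.eval1 R (P1.eval1 R y)
        · right
          have hA := fiber_eq R (by omega) hdeg h1
          rw [← e02] at hA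
          have hB := fiber_eq R (by omega) hdeg h0
          rw [hiter2, hA, hB]
        · exact (no_three R hD hdeg e01 e02 e12 h0 h1 h2).elim
  · rw [hprod]
    have hone : P1.locDeg R y < D ∨ P1.locDeg R (P1.eval1 R y) < D
        ∨ P1.locDeg R (P1.eval1 R (P1.eval1 R y)) < D := by
      by_contra hc
      push_neg at hc
      exact hall ⟨by omega, by omega, by omega⟩
    have hD3 : D ^ 3 = D * D * D := by ring
    rw [hD3]
    have key : ∀ a b c : ℕ, a < D → b ≤ D → c ≤ D → a * (b * c) < D * D * D := by
      intro a b c h hb hc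
      calc a * (b * c) ≤ a * (D * D) := Nat.mul_le_mul (le_refl a) (Nat.mul_le_mul hb hc)
        _ < D * (D * D) := mul_lt_mul_of_pos_right h (by positivity)
        _ = D * D * D := by ring
    rcases hone with h | h | h
    · rw [mul_assoc]
      exact key _ _ _ h hl1 hl2
    · rw [show P1.locDeg R y * P1.locDeg R (P1.eval1 R y) * P1.locDeg R (P1.eval1 R (P1.eval1 R y))
        = P1.locDeg R (P1.eval1 R y) * (P1.locDeg R y * P1.locDeg R (P1.eval1 R (P1.eval1 R y)))
        from by ring]
      exact key _ _ _ h hl0 hl2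
    · rw [show P1.locDeg R y * P1.locDeg R (P1.eval1 R y) * P1.locDeg R (P1.eval1 R (P1.eval1 R y))
        = P1.locDeg R (P1.eval1 R (P1.eval1 R y)) * (P1.locDeg R y * P1.locDeg R (P1.eval1 R y))
        from by ring]
      exact key _ _ _ h hl0 hl1
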